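/- arXiv:2601.14920 — 3 statements merged into one kernel-verified Lean document; each statement's English description precedes it below -/
import Mathlib

section
/- Let k be a perfect field of characteristic p > 0 and let K = Frac(k[[t_1,...,t_n]]). Then K is a vector space of dimension p^n over the subfield K^{<p>} = F(K), where F is the field homomorphism extending the Frobenius of k by F(t_i) = t_i^p; a basis is given by the monomials t_1^{r_1}...t_n^{r_n} with 0 ≤ r_i ≤ p-1. -/
open scoped Classical

/-- The Frobenius on multivariate power series: `Σ a_i t^i ↦ Σ a_i^p t^{p·i}`. -/
noncomputable def frobMv {n : ℕ} {k : Type*} [CommSemiring k] (p : ℕ)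
    (g : MvPowerSeries (Fin n) k) : MvPowerSeries (Fin n) k :=
  fun i => if ∀ j, p ∣ i j then
    (MvPowerSeries.coeff (Finsupp.mapRange (· / p) (Nat.zero_div p) i) g) ^ p else 0


open MvPowerSeries Finset

section Aux

variable {k : Type*} [Field k] {p n : ℕ}

noncomputable def expOf (n p : ℕ) (r : Fin n → Fin p) : Fin n →₀ ℕ :=
  Finsupp.equivFunOnFinite.symm (fun i => (r i : ℕ))

@[simp] lemma expOf_apply (r : Fin n → Fin p) (i : Fin n) : expOf n p r i = (r i : ℕ) := rfl

lemma coeff_frobMv (g : MvPowerSeries (Fin n) k) (m : Fin n →₀ ℕ) :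
    MvPowerSeries.coeff m (frobMv p g) = if ∀ j, p ∣ m j then
      (MvPowerSeries.coeff (Finsupp.mapRange (· / p) (Nat.zero_div p) m) g) ^ p else 0 := rfl

lemma monomial_pow' (d : Fin n →₀ ℕ) (a : k) (j : ℕ) :
    (MvPowerSeries.monomial (R := k) d a) ^ j = MvPowerSeries.monomial (R := k) (j • d) (a ^ j) := by
  induction j with
  | zero => simp [MvPowerSeries.monomial_zero_one]
  | succ j ih =>
    rw [pow_succ, ih, MvPowerSeries.monomial_mul_monomial, pow_succ, succ_nsmul]

lemma charP_mvps [CharP k p] : CharP (MvPowerSeries (Fin n) k) p :=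
  charP_of_injective_ringHom (f := MvPowerSeries.C (σ := Fin n) (R := k))
    (fun a b h => by
      have := congrArg (MvPowerSeries.constantCoeff (σ := Fin n) (R := k)) h
      simpa using this) p

/-- coefficients of a product only depend on coefficients below. -/
lemma coeff_mul_congr {f f' g g' : MvPowerSeries (Fin n) k} {m : Fin n →₀ ℕ}
    (hf : ∀ b ≤ m, MvPowerSeries.coeff b f = MvPowerSeries.coeff b f')
    (hg : ∀ b ≤ m, MvPowerSeries.coeff b g = MvPowerSeries.coeff b g') :
    MvPowerSeries.coeff m (f * g) = MvPowerSeries.coeff m (f' * g') := by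
  rw [MvPowerSeries.coeff_mul, MvPowerSeries.coeff_mul]
  refine Finset.sum_congr rfl fun x hx => ?_
  rw [Finset.HasAntidiagonal.mem_antidiagonal] at hx
  rw [hf x.1 (hx ▸ le_self_add), hg x.2 (hx ▸ le_add_self)]

lemma coeff_pow_congr {f f' : MvPowerSeries (Fin n) k} {m : Fin n →₀ ℕ}
    (hf : ∀ b ≤ m, MvPowerSeries.coeff b f = MvPowerSeries.coeff b f') (j : ℕ) :
    ∀ b ≤ m, MvPowerSeries.coeff b (f ^ j) = MvPowerSeries.coeff b (f' ^ j) := by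
  induction j with
  | zero => simp
  | succ j ih =>
    intro b hb
    rw [pow_succ, pow_succ]
    exact coeff_mul_congr (fun c hc => ih c (hc.trans hb))
      (fun c hc => hf c (hc.trans hb))

theorem frobMv_eq_pow [Fact p.Prime] [CharP k p] (g : MvPowerSeries (Fin n) k) :
    frobMv p g = g ^ p := by
  haveI := charP_mvps (k := k) (p := p) (n := n)
  have hp : 0 < p := (Fact.out : p.Prime).pos
  ext m
  set T : MvPowerSeries (Fin n) k :=
    ∑ d ∈ Finset.Iic m, MvPowerSeries.monomial (R := k) d (MvPowerSeries.coeff d g) with hT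
  have hTc : ∀ b ≤ m, MvPowerSeries.coeff b g = MvPowerSeries.coeff b T := by
    intro b hb
    rw [hT, map_sum]
    rw [Finset.sum_eq_single b]
    · simp [MvPowerSeries.coeff_monomial]
    · intro d _ hd
      rw [MvPowerSeries.coeff_monomial, if_neg (Ne.symm hd)]
    · intro hbm
      exact absurd (Finset.mem_Iic.2 hb) hbm
  have h1 : MvPowerSeries.coeff m (g ^ p) = MvPowerSeries.coeff m (T ^ p) :=
    coeff_pow_congr hTc p m le_rfl
  have h2 : T ^ p = ∑ d ∈ Finset.Iic m,
      MvPowerSeries.monomial (R := k) (p • d) ((MvPowerSeries.coeff d g) ^ p) := by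
    rw [hT, sum_pow_char]
    exact Finset.sum_congr rfl fun d _ => monomial_pow' d _ p
  rw [h1, h2, map_sum, coeff_frobMv]
  by_cases hdvd : ∀ j, p ∣ m j
  · rw [if_pos hdvd]
    set d₀ : Fin n →₀ ℕ := Finsupp.mapRange (· / p) (Nat.zero_div p) m with hd₀
    rw [Finset.sum_eq_single d₀]
    · rw [MvPowerSeries.coeff_monomial, if_pos]
      ext i
      rw [Finsupp.smul_apply, hd₀, Finsupp.mapRange_apply, smul_eq_mul]
      exact (Nat.mul_div_cancel' (hdvd i)).symm
    · intro d _ hd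
      rw [MvPowerSeries.coeff_monomial, if_neg]
      intro hmd
      apply hd
      ext i
      rw [hd₀, Finsupp.mapRange_apply, hmd, Finsupp.smul_apply, smul_eq_mul,
        Nat.mul_div_cancel_left _ hp]
    · intro hnm
      exfalso
      apply hnm
      rw [Finset.mem_Iic, Finsupp.le_def]
      intro i
      rw [hd₀, Finsupp.mapRange_apply]
      exact Nat.div_le_self _ _
  · rw [if_neg hdvd]
    symm
    apply Finset.sum_eq_zero
    intro d _
    rw [MvPowerSeries.coeff_monomial, if_neg]
    intro hmd
    exact hdvd fun j => ⟨d j, by rw [hmd]; simp [mul_comm]⟩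

end Aux

section Decomp

variable {k : Type*} [Field k] {p n : ℕ} [Fact p.Prime] [CharP k p]

lemma nat_mod_eq_of_dvd_sub {r Mi : ℕ} (hlt : r < p) (hle : r ≤ Mi) (hdvd : p ∣ Mi - r) :
    Mi % p = r := by
  obtain ⟨t, ht⟩ := hdvd
  have : Mi = p * t + r := by omega
  rw [this, Nat.mul_add_mod, Nat.mod_eq_of_lt hlt]

lemma coeff_pow_mul_monomial (f : MvPowerSeries (Fin n) k) (r : Fin n → Fin p)
    (M : Fin n →₀ ℕ) :
    MvPowerSeries.coeff M (f ^ p * MvPowerSeries.monomial (R := k) (expOf n p r) 1) =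
    if ∀ i, M i % p = (r i : ℕ) then
      (MvPowerSeries.coeff
        (Finsupp.mapRange (· / p) (Nat.zero_div p) (M - expOf n p r)) f) ^ p
    else 0 := by
  rw [← frobMv_eq_pow, MvPowerSeries.coeff_mul_monomial]
  by_cases hcong : ∀ i, M i % p = (r i : ℕ)
  · rw [if_pos hcong, if_pos, mul_one, coeff_frobMv, if_pos]
    · intro j
      have hd := Nat.div_add_mod (M j) p
      rw [Finsupp.tsub_apply, expOf_apply, ← hcong j]
      exact ⟨M j / p, by omega⟩
    · rw [Finsupp.le_def]
      intro i
      rw [expOf_apply, ← hcong i]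
      exact Nat.mod_le _ _
  · rw [if_neg hcong]
    by_cases hle : expOf n p r ≤ M
    · rw [if_pos hle, coeff_frobMv, if_neg, zero_mul]
      intro hall
      apply hcong
      intro i
      have h1 := hall i
      rw [Finsupp.tsub_apply, expOf_apply] at h1
      exact nat_mod_eq_of_dvd_sub (r i).2 (Finsupp.le_def.1 hle i) h1
    · rw [if_neg hle]

variable [PerfectRing k p]

noncomputable def compR (p : ℕ) [Fact p.Prime] [CharP k p] [PerfectRing k p]
    (r : Fin n → Fin p) (h : MvPowerSeries (Fin n) k) : MvPowerSeries (Fin n) k :=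
  fun m => (frobeniusEquiv k p).symm (MvPowerSeries.coeff (p • m + expOf n p r) h)

lemma coeff_compR (r : Fin n → Fin p) (h : MvPowerSeries (Fin n) k) (m : Fin n →₀ ℕ) :
    MvPowerSeries.coeff m (compR p r h) =
      (frobeniusEquiv k p).symm (MvPowerSeries.coeff (p • m + expOf n p r) h) := rfl

theorem decompR (h : MvPowerSeries (Fin n) k) :
    ∑ r : Fin n → Fin p, (compR p r h) ^ p * MvPowerSeries.monomial (R := k) (expOf n p r) 1
      = h := by
  have hp : 0 < p := (Fact.out : p.Prime).pos
  ext M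
  rw [map_sum]
  have hr₀ : ∀ i, (M i % p) < p := fun i => Nat.mod_lt _ hp
  set r₀ : Fin n → Fin p := fun i => ⟨M i % p, hr₀ i⟩ with hr₀def
  rw [Finset.sum_eq_single r₀]
  · rw [coeff_pow_mul_monomial, if_pos (fun i => rfl), coeff_compR]
    have hidx : p • (Finsupp.mapRange (· / p) (Nat.zero_div p) (M - expOf n p r₀))
        + expOf n p r₀ = M := by
      ext i
      rw [Finsupp.add_apply, Finsupp.smul_apply, Finsupp.mapRange_apply, Finsupp.tsub_apply,
        expOf_apply, smul_eq_mul]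
      show p * ((M i - M i % p) / p) + M i % p = M i
      have hd := Nat.div_add_mod (M i) p
      have hdvd : M i - M i % p = p * (M i / p) := by omega
      rw [hdvd, Nat.mul_div_cancel_left _ hp]
      omega
    rw [hidx, frobeniusEquiv_symm_pow_p]
  · intro s _ hs
    rw [coeff_pow_mul_monomial, if_neg]
    intro hc
    apply hs
    funext i
    exact Fin.ext (hc i).symm
  · intro h'
    exact absurd (Finset.mem_univ r₀) h'

theorem eq_zero_of_sum_pow_monomial {A : (Fin n → Fin p) → MvPowerSeries (Fin n) k}
    (hsum : ∑ r : Fin n → Fin p, (A r) ^ p * MvPowerSeries.monomial (R := k) (expOf n p r) 1 = 0)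
    (r : Fin n → Fin p) : A r = 0 := by
  have hp : 0 < p := (Fact.out : p.Prime).pos
  ext m
  have hkey := congrArg (MvPowerSeries.coeff (p • m + expOf n p r)) hsum
  rw [map_sum, map_zero] at hkey
  have hmod : ∀ i, (p • m + expOf n p r) i % p = (r i : ℕ) := by
    intro i
    rw [Finsupp.add_apply, Finsupp.smul_apply, expOf_apply, smul_eq_mul, Nat.mul_add_mod,
      Nat.mod_eq_of_lt (r i).2]
  rw [Finset.sum_eq_single r] at hkey
  · rw [coeff_pow_mul_monomial, if_pos hmod] at hkey
    have hidx : Finsupp.mapRange (· / p) (Nat.zero_div p)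
        ((p • m + expOf n p r) - expOf n p r) = m := by
      ext i
      rw [Finsupp.mapRange_apply, Finsupp.tsub_apply, Finsupp.add_apply, Finsupp.smul_apply,
        smul_eq_mul]
      show (p * m i + expOf n p r i - expOf n p r i) / p = m i
      rw [Nat.add_sub_cancel, Nat.mul_div_cancel_left _ hp]
    rw [hidx] at hkey
    rw [map_zero]
    exact pow_eq_zero_iff hp.ne'  |>.1 hkey
  · intro s _ hs
    rw [coeff_pow_mul_monomial, if_neg]
    intro hc
    apply hs
    funext i
    exact Fin.ext ((hc i).symm.trans (hmod i))
  · intro h'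
    exact absurd (Finset.mem_univ r) h'

lemma prod_monomial {ι : Type*} (s : Finset ι) (d : ι → (Fin n →₀ ℕ)) :
    ∏ i ∈ s, MvPowerSeries.monomial (R := k) (d i) 1 = MvPowerSeries.monomial (R := k) (∑ i ∈ s, d i) 1 := by
  induction s using Finset.cons_induction with
  | empty => simp [MvPowerSeries.monomial_zero_one]
  | cons a s ha ih =>
    rw [Finset.prod_cons, Finset.sum_cons, ih, MvPowerSeries.monomial_mul_monomial, one_mul]

lemma prod_X_pow (r : Fin n → Fin p) :
    ∏ i : Fin n, (MvPowerSeries.X i : MvPowerSeries (Fin n) k) ^ (r i : ℕ)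
      = MvPowerSeries.monomial (R := k) (expOf n p r) 1 := by
  have h1 : ∀ i : Fin n, (MvPowerSeries.X i : MvPowerSeries (Fin n) k) ^ (r i : ℕ)
      = MvPowerSeries.monomial (R := k) (Finsupp.single i (r i : ℕ)) 1 := fun i =>
    MvPowerSeries.X_pow_eq i (r i : ℕ)
  rw [Finset.prod_congr rfl (fun i _ => h1 i), _root_.prod_monomial]
  have h2 : (∑ i : Fin n, Finsupp.single i (r i : ℕ)) = expOf n p r := by
    ext j
    rw [Finsupp.finset_sum_apply]
    simp [Finsupp.single_apply]
  rw [h2]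

end Decomp


set_option maxHeartbeats 1000000 in
/-- for a perfect field `k` of characteristic `p > 0`, the fraction field
`K` of `k[[t_1,…,t_n]]` has dimension `p^n` over the image `K^{⟨p⟩}` of the Frobenius
`F` (the field homomorphism extending the Frobenius of `k` by `F(t_i) = t_i^p`),
with basis the monomials `t_1^{r_1} ⋯ t_n^{r_n}`, `0 ≤ r_i ≤ p-1`. -/
theorem stmt0 (p n : ℕ) [Fact p.Prime] (k : Type*) [Field k] [CharP k p] [PerfectRing k p]
    (F : FractionRing (MvPowerSeries (Fin n) k) →+* FractionRing (MvPowerSeries (Fin n) k))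
    (hF : ∀ g : MvPowerSeries (Fin n) k,
      F (algebraMap (MvPowerSeries (Fin n) k) (FractionRing (MvPowerSeries (Fin n) k)) g)
        = algebraMap (MvPowerSeries (Fin n) k) (FractionRing (MvPowerSeries (Fin n) k))
            (frobMv p g)) :
    (∃ B : Module.Basis (Fin n → Fin p) F.fieldRange (FractionRing (MvPowerSeries (Fin n) k)),
      ∀ r : Fin n → Fin p,
        B r = ∏ i : Fin n,
          (algebraMap (MvPowerSeries (Fin n) k) (FractionRing (MvPowerSeries (Fin n) k))
            (MvPowerSeries.X i)) ^ ((r i : ℕ))) ∧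
    Module.rank F.fieldRange (FractionRing (MvPowerSeries (Fin n) k)) = p ^ n := by
  classical
  have hp : 0 < p := (Fact.out : p.Prime).pos
  set K := FractionRing (MvPowerSeries (Fin n) k) with hK
  set ι := algebraMap (MvPowerSeries (Fin n) k) K with hι
  have hinj : Function.Injective ι := IsFractionRing.injective (MvPowerSeries (Fin n) k) K
  set b : (Fin n → Fin p) → K := fun r => ∏ i : Fin n, (ι (MvPowerSeries.X i)) ^ ((r i : ℕ))
    with hb
  have hbmon : ∀ r, b r = ι (MvPowerSeries.monomial (R := k) (expOf n p r) 1) := by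
    intro r
    rw [hb, ← prod_X_pow (k := k) r, map_prod]
    exact Finset.prod_congr rfl fun i _ => (map_pow ι _ _).symm
  have hF' : ∀ g, F (ι g) = ι (g ^ p) := fun g => by rw [hF, frobMv_eq_pow]
  -- span
  have hspan_int : ∀ h : MvPowerSeries (Fin n) k,
      ι h ∈ Submodule.span F.fieldRange (Set.range b) := by
    intro h
    have hsum : ι h = ∑ r : Fin n → Fin p,
        (⟨F (ι (compR p r h)), ⟨_, rfl⟩⟩ : F.fieldRange) • b r := by
      conv_lhs => rw [← decompR (p := p) h]
      rw [map_sum]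
      refine Finset.sum_congr rfl fun r _ => ?_
      show ι _ = F (ι (compR p r h)) * b r
      rw [hF', hbmon, map_mul, map_pow]
    rw [hsum]
    exact Submodule.sum_mem _ fun r _ => Submodule.smul_mem _ _
      (Submodule.subset_span (Set.mem_range_self r))
  have hspan : ⊤ ≤ Submodule.span F.fieldRange (Set.range b) := by
    intro x _
    obtain ⟨g, f, hf, hx⟩ := IsFractionRing.div_surjective (A := MvPowerSeries (Fin n) k) x
    have hfne : ι f ≠ 0 :=
      IsFractionRing.to_map_ne_zero_of_mem_nonZeroDivisors hf
    have hFf : F (ι f) ∈ F.fieldRange := ⟨_, rfl⟩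
    have hFfne : F (ι f) ≠ 0 := by
      rw [hF', map_pow]
      exact pow_ne_zero _ hfne
    have hxx : x = (⟨F (ι f), hFf⟩ : F.fieldRange)⁻¹ • ι (g * f ^ (p - 1)) := by
      show x = (F (ι f))⁻¹ * ι (g * f ^ (p - 1))
      rw [hF', map_pow, map_mul, map_pow, ← hx]
      rw [show p = (p - 1) + 1 by omega, pow_succ, Nat.add_sub_cancel]
      change ι g / ι f = _
      field_simp
    rw [hxx]
    exact Submodule.smul_mem _ _ (hspan_int _)
  -- linear independence
  have hli : LinearIndependent F.fieldRange b := by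
    rw [Fintype.linearIndependent_iff]
    intro c hc r
    choose x hx using fun r => (c r).2
    choose a d hd had using fun r =>
      IsFractionRing.div_surjective (A := MvPowerSeries (Fin n) k) (x r)
    have hdne : ∀ s, ι (d s) ≠ 0 := fun s =>
      IsFractionRing.to_map_ne_zero_of_mem_nonZeroDivisors (hd s)
    set D : MvPowerSeries (Fin n) k := ∏ s : Fin n → Fin p, d s with hD
    set A : (Fin n → Fin p) → MvPowerSeries (Fin n) k :=
      fun r => a r * ∏ s ∈ Finset.univ.erase r, d s with hA
    have hstep : ∀ r, (↑(c r) : K) * F (ι D) = ι ((A r) ^ p) := by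
      intro r
      have h1 : x r * ι (d r) = ι (a r) := by
        rw [← had r, div_mul_cancel₀ _ (hdne r)]
      have h2 : x r * ι D = ι (A r) := by
        rw [hD, hA, map_mul, ← Finset.mul_prod_erase _ _ (Finset.mem_univ r), map_mul,
          ← mul_assoc, h1, map_prod]
      rw [← hx r, ← map_mul, h2, hF']
    have hzero : ι (∑ r : Fin n → Fin p,
        (A r) ^ p * MvPowerSeries.monomial (R := k) (expOf n p r) 1) = 0 := by
      rw [map_sum]
      have : ∀ r : Fin n → Fin p, ι ((A r) ^ p * MvPowerSeries.monomial (R := k) (expOf n p r) 1)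
          = ((↑(c r) : K) * b r) * F (ι D) := by
        intro r
        rw [map_mul, ← hstep r, hbmon]
        ring
      rw [Finset.sum_congr rfl fun r _ => this r, ← Finset.sum_mul]
      have hcc : ∑ r : Fin n → Fin p, (↑(c r) : K) * b r = 0 := by
        rw [← hc]
        exact Finset.sum_congr rfl fun r _ => rfl
      rw [hcc, zero_mul]
    rw [← map_zero ι] at hzero
    have hAzero := eq_zero_of_sum_pow_monomial (hinj hzero) r
    have haz : ι (a r) = 0 := by
      rw [hA] at hAzero
      have hprodne : ι (∏ s ∈ Finset.univ.erase r, d s) ≠ 0 := by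
        rw [map_prod]
        exact Finset.prod_ne_zero_iff.2 fun s _ => hdne s
      have := congrArg ι hAzero
      rw [map_mul, map_zero] at this
      exact (mul_eq_zero.1 this).resolve_right hprodne
    have hxr : x r = 0 := by rw [← had r, haz, zero_div]
    have : (↑(c r) : K) = 0 := by rw [← hx r, hxr, map_zero]
    exact Subtype.ext this
  refine ⟨⟨Module.Basis.mk hli hspan, fun r => by rw [Module.Basis.mk_apply]⟩, ?_⟩
  rw [rank_eq_card_basis (Module.Basis.mk hli hspan), Fintype.card_fun, Fintype.card_fin,
    Fintype.card_fin, Nat.cast_pow]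
end

section
/- For nonzero multivariate polynomials A, B ∈ k[x_1,...,x_m] over a field k, the Newton polytope of the product satisfies NP(AB) = NP(A) + NP(B), where + denotes the Minkowski sum. -/
open scoped Pointwise

/-- The Newton polytope of a multivariate polynomial: the convex hull in `ℝ^m` of its
exponent vectors. -/
noncomputable def newtonPolytope {m : ℕ} {k : Type*} [CommSemiring k]
    (A : MvPolynomial (Fin m) k) : Set (Fin m → ℝ) :=
  convexHull ℝ ((fun d : Fin m →₀ ℕ => fun i => (d i : ℝ)) '' ↑A.support)

/-- The exponent-vector embedding. -/
noncomputable def expVec {m : ℕ} (d : Fin m →₀ ℕ) : Fin m → ℝ := fun i => (d i : ℝ)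

lemma expVec_add {m : ℕ} (a b : Fin m →₀ ℕ) : expVec (a + b) = expVec a + expVec b := by
  funext i; simp [expVec]

lemma expVec_inj {m : ℕ} : Function.Injective (expVec (m := m)) := fun a b h =>
  Finsupp.ext fun i => Nat.cast_injective (congrFun h i)

lemma expVec_image_add {m : ℕ} (s t : Set (Fin m →₀ ℕ)) :
    expVec '' (s + t) = expVec '' s + expVec '' t := by
  ext x
  constructor
  · rintro ⟨d, ⟨a, ha, b, hb, rfl⟩, rfl⟩
    exact ⟨expVec a, Set.mem_image_of_mem _ ha, expVec b, Set.mem_image_of_mem _ hb,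
      (expVec_add a b).symm⟩
  · rintro ⟨_, ⟨a, ha, rfl⟩, _, ⟨b, hb, rfl⟩, rfl⟩
    exact ⟨a + b, ⟨a, ha, b, hb, rfl⟩, expVec_add a b⟩

lemma newtonPolytope_eq {m : ℕ} {k : Type*} [CommSemiring k] (A : MvPolynomial (Fin m) k) :
    newtonPolytope A = convexHull ℝ (expVec '' ↑A.support) := rfl

set_option maxHeartbeats 1000000 in
/-- for nonzero polynomials `A, B` over a field, `NP(AB) = NP(A) + NP(B)`
(Minkowski sum). -/
theorem stmt8 (m : ℕ) (k : Type*) [Field k] (A B : MvPolynomial (Fin m) k)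
    (hA : A ≠ 0) (hB : B ≠ 0) :
    newtonPolytope (A * B) = newtonPolytope A + newtonPolytope B := by
  have hsum : newtonPolytope A + newtonPolytope B
      = convexHull ℝ (expVec '' ((A.support : Set (Fin m →₀ ℕ)) + (B.support : Set (Fin m →₀ ℕ)))) := by
    rw [expVec_image_add, convexHull_add, newtonPolytope_eq, newtonPolytope_eq]
  have hNPclosed : IsClosed (newtonPolytope (A * B)) := by
    rw [newtonPolytope_eq]
    exact ((((A * B).support : Set (Fin m →₀ ℕ)).toFinite.image expVec).isCompact_convexHull ℝ).isClosed
  have hNPconv : Convex ℝ (newtonPolytope (A * B)) := by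
    rw [newtonPolytope_eq]; exact convex_convexHull ℝ _
  refine Set.Subset.antisymm ?_ ?_
  · rw [hsum, newtonPolytope_eq]
    refine convexHull_mono (Set.image_mono ?_)
    refine (Finset.coe_subset.mpr (MvPolynomial.support_mul A B)).trans ?_
    rw [Finset.coe_add]
  · rw [hsum]
    set S : Set (Fin m → ℝ) := expVec '' ((A.support : Set (Fin m →₀ ℕ)) + (B.support : Set (Fin m →₀ ℕ))) with hS
    have hSfin : S.Finite :=
      (((A.support : Set (Fin m →₀ ℕ)).toFinite.add (B.support : Set (Fin m →₀ ℕ)).toFinite)).image _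
    have hext : (convexHull ℝ S).extremePoints ℝ ⊆ newtonPolytope (A * B) := by
      intro v hv
      have hvS : v ∈ S := extremePoints_convexHull_subset hv
      obtain ⟨d, ⟨a, ha, b, hb, rfl⟩, rfl⟩ := hvS
      -- uniqueness of the decomposition
      have huniq : ∀ a' ∈ A.support, ∀ b' ∈ B.support,
          expVec a' + expVec b' = expVec (a + b) → a' = a ∧ b' = b := by
        intro a' ha' b' hb' heq
        have hp₁ : expVec a + expVec b' ∈ convexHull ℝ S :=
          subset_convexHull ℝ S ⟨a + b', ⟨a, ha, b', hb', rfl⟩, expVec_add a b'⟩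
        have hp₂ : expVec a' + expVec b ∈ convexHull ℝ S :=
          subset_convexHull ℝ S ⟨a' + b, ⟨a', ha', b, hb, rfl⟩, expVec_add a' b⟩
        have hseg : expVec (a + b) ∈
            openSegment ℝ (expVec a + expVec b') (expVec a' + expVec b) := by
          refine ⟨1/2, 1/2, by norm_num, by norm_num, by norm_num, ?_⟩
          funext i
          have hi := congrFun heq i
          simp only [expVec, Pi.add_apply, Finsupp.add_apply, Nat.cast_add] at hi
          simp only [expVec, Pi.add_apply, Pi.smul_apply, smul_eq_mul, Finsupp.add_apply,
            Nat.cast_add]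
          linarith
        obtain ⟨h₁, h₂⟩ := (mem_extremePoints.1 hv).2 _ hp₁ _ hp₂ hseg
        have hb' : expVec b' = expVec b := by
          have := h₁
          rw [expVec_add] at this
          exact add_left_cancel this
        have hbb : b' = b := expVec_inj hb'
        refine ⟨expVec_inj ?_, hbb⟩
        have : expVec a' + expVec b = expVec a + expVec b := by
          rw [← hbb]; rw [heq, expVec_add, hbb]
        exact add_right_cancel this
      have hcoeff : (A * B).coeff (a + b) = A.coeff a * B.coeff b := by
        rw [MvPolynomial.coeff_mul]
        refine Finset.sum_eq_single (a, b) ?_ ?_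
        · intro p hp hne
          by_contra h
          have h1 : p.1 ∈ A.support := MvPolynomial.mem_support_iff.2 (left_ne_zero_of_mul h)
          have h2 : p.2 ∈ B.support := MvPolynomial.mem_support_iff.2 (right_ne_zero_of_mul h)
          have hpe : p.1 + p.2 = a + b := Finset.HasAntidiagonal.mem_antidiagonal.1 hp
          have := huniq p.1 h1 p.2 h2 (by rw [← expVec_add, hpe])
          exact hne (Prod.ext this.1 this.2)
        · intro h; simp [Finset.HasAntidiagonal.mem_antidiagonal] at h
      have hmem : a + b ∈ (A * B).support := by
        rw [MvPolynomial.mem_support_iff, hcoeff]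
        exact mul_ne_zero (MvPolynomial.mem_support_iff.1 ha) (MvPolynomial.mem_support_iff.1 hb)
      rw [newtonPolytope_eq]
      exact subset_convexHull ℝ _ (Set.mem_image_of_mem _ hmem)
    calc convexHull ℝ S
        = closure (convexHull ℝ ((convexHull ℝ S).extremePoints ℝ)) :=
          (closure_convexHull_extremePoints (hSfin.isCompact_convexHull ℝ)
            (convex_convexHull ℝ S)).symm
      _ ⊆ closure (newtonPolytope (A * B)) :=
          closure_mono (convexHull_min hext hNPconv)
      _ = newtonPolytope (A * B) := hNPclosed.closure_eq
end

section
/- Let k be a field of characteristic p > 0 with perfect closure k_p, and let f ∈ k[[t_1,...,t_n]] be algebraic over k(t_1,...,t_n). Then the degree of the field extension k(t)(f) over k(t) equals the degree of k_p(t)(f) over k_p(t). -/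
open Polynomial MvPowerSeries

section Aux

variable {n : ℕ}

private lemma algebraMap_mvPoly_eq_coe {F : Type*} [CommSemiring F]
    (q : MvPolynomial (Fin n) F) :
    algebraMap (MvPolynomial (Fin n) F) (MvPowerSeries (Fin n) F) q = ↑q := by
  apply MvPowerSeries.ext; intro d
  simp [MvPowerSeries.algebraMap_apply', MvPowerSeries.coeff_map,
    MvPolynomial.coeff_map]

private lemma coe_sum_monomial {F : Type*} [CommSemiring F]
    (q : MvPolynomial (Fin n) F) :
    (↑q : MvPowerSeries (Fin n) F)
      = ∑ d ∈ q.support, ↑(MvPolynomial.monomial d (q.coeff d)) := by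
  conv_lhs => rw [← MvPolynomial.support_sum_monomial_coeff q]
  rw [← MvPolynomial.coeToMvPowerSeries.ringHom_apply, map_sum]
  rfl

variable {K L : Type*} [Field K] [Field L] [Algebra K L]

private lemma coe_map_ringHom_eq :
    (MvPowerSeries.map (algebraMap K L)).comp
        (algebraMap (MvPolynomial (Fin n) K) (MvPowerSeries (Fin n) K))
      = (algebraMap (MvPolynomial (Fin n) L) (MvPowerSeries (Fin n) L)).comp
        (MvPolynomial.map (algebraMap K L)) := by
  apply RingHom.ext; intro q
  apply MvPowerSeries.ext; intro d
  simp [MvPowerSeries.algebraMap_apply', MvPowerSeries.coeff_map,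
    MvPolynomial.coeff_map]

private lemma aeval_map_eq (f : MvPowerSeries (Fin n) K)
    (E : Polynomial (MvPolynomial (Fin n) K)) :
    Polynomial.aeval (MvPowerSeries.map (algebraMap K L) f)
        (E.map (MvPolynomial.map (algebraMap K L)))
      = MvPowerSeries.map (algebraMap K L) (Polynomial.aeval f E) := by
  rw [Polynomial.aeval_def, Polynomial.aeval_def, Polynomial.eval₂_map,
      Polynomial.hom_eval₂, coe_map_ringHom_eq]

variable {ι : Type*}

/-- Basis-component extraction, coefficientwise on power series. -/
private noncomputable def psi (B : Module.Basis ι K L) (b : ι) :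
    MvPowerSeries (Fin n) L →+ MvPowerSeries (Fin n) K where
  toFun g := fun d => B.repr (g d) b
  map_zero' := by
    funext d
    show B.repr (MvPowerSeries.coeff d 0) b = 0
    simp
  map_add' g h := by
    funext d
    show B.repr (MvPowerSeries.coeff d (g + h)) b
      = B.repr (MvPowerSeries.coeff d g) b + B.repr (MvPowerSeries.coeff d h) b
    simp

private lemma coeff_psi (B : Module.Basis ι K L) (b : ι) (g : MvPowerSeries (Fin n) L)
    (d : (Fin n) →₀ ℕ) :
    MvPowerSeries.coeff d (psi B b g) = B.repr (MvPowerSeries.coeff d g) b := rfl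

private lemma repr_mul_algebraMap (B : Module.Basis ι K L) (b : ι) (c : L) (a : K) :
    B.repr (c * algebraMap K L a) b = B.repr c b * a := by
  rw [mul_comm c, ← Algebra.smul_def, map_smul, Finsupp.smul_apply, smul_eq_mul, mul_comm]

private lemma psi_monomial_mul_pow (B : Module.Basis ι K L) (b : ι)
    (f : MvPowerSeries (Fin n) K) (d : (Fin n) →₀ ℕ) (c : L) (i : ℕ) :
    psi B b (MvPowerSeries.monomial d c
        * (MvPowerSeries.map (algebraMap K L) f) ^ i)
      = MvPowerSeries.monomial d (B.repr c b) * f ^ i := by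
  apply MvPowerSeries.ext; intro e
  rw [coeff_psi, MvPowerSeries.coeff_monomial_mul, MvPowerSeries.coeff_monomial_mul]
  split_ifs with h
  · rw [← map_pow, MvPowerSeries.coeff_map, repr_mul_algebraMap, mul_comm]
  · simp

/-- basis-component extraction on multivariate polynomials -/
private noncomputable def mvrho (B : Module.Basis ι K L) (b : ι)
    (q : MvPolynomial (Fin n) L) : MvPolynomial (Fin n) K :=
  ∑ d ∈ q.support, MvPolynomial.monomial d (B.repr (q.coeff d) b)

private lemma coeff_mvrho (B : Module.Basis ι K L) (b : ι) (q : MvPolynomial (Fin n) L)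
    (d : (Fin n) →₀ ℕ) :
    (mvrho B b q).coeff d = B.repr (q.coeff d) b := by
  classical
  rw [mvrho, MvPolynomial.coeff_sum]
  simp only [MvPolynomial.coeff_monomial]
  rw [Finset.sum_ite_eq' q.support d fun x => B.repr (q.coeff x) b]
  split_ifs with h
  · rfl
  · rw [MvPolynomial.notMem_support_iff.mp h]; simp

/-- basis-component extraction on polynomials over mv polynomials -/
private noncomputable def rho (B : Module.Basis ι K L) (b : ι)
    (E : Polynomial (MvPolynomial (Fin n) L)) : Polynomial (MvPolynomial (Fin n) K) :=
  ∑ i ∈ E.support, Polynomial.C (mvrho B b (E.coeff i)) * Polynomial.X ^ i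

private lemma coeff_rho (B : Module.Basis ι K L) (b : ι)
    (E : Polynomial (MvPolynomial (Fin n) L)) (i : ℕ) :
    (rho B b E).coeff i = mvrho B b (E.coeff i) := by
  classical
  rw [rho, Polynomial.finset_sum_coeff]
  simp only [Polynomial.coeff_C_mul, Polynomial.coeff_X_pow, mul_ite, mul_one, mul_zero]
  rw [Finset.sum_ite_eq E.support i fun x => mvrho B b (E.coeff x)]
  split_ifs with h
  · rfl
  · have h0 : E.coeff i = 0 := Polynomial.notMem_support_iff.mp h
    rw [h0]
    apply MvPolynomial.ext; intro d
    rw [coeff_mvrho]; simp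

private lemma aeval_rho (B : Module.Basis ι K L) (b : ι) (f : MvPowerSeries (Fin n) K)
    (E : Polynomial (MvPolynomial (Fin n) L)) :
    Polynomial.aeval f (rho B b E)
      = psi B b (Polynomial.aeval (MvPowerSeries.map (algebraMap K L) f) E) := by
  classical
  conv_rhs => rw [Polynomial.aeval_def, Polynomial.eval₂_eq_sum, Polynomial.sum_def]
  rw [map_sum]
  conv_lhs => rw [rho]
  rw [map_sum]
  apply Finset.sum_congr rfl
  intro i _
  rw [map_mul, map_pow, Polynomial.aeval_C, Polynomial.aeval_X,
      algebraMap_mvPoly_eq_coe, algebraMap_mvPoly_eq_coe]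
  rw [mvrho]
  rw [coe_sum_monomial (E.coeff i)]
  rw [← MvPolynomial.coeToMvPowerSeries.ringHom_apply, map_sum, Finset.sum_mul,
      Finset.sum_mul, map_sum]
  apply Finset.sum_congr rfl
  intro d _
  rw [MvPolynomial.coe_monomial, psi_monomial_mul_pow,
    MvPolynomial.coeToMvPowerSeries.ringHom_apply, MvPolynomial.coe_monomial]

end Aux

/-- for `f ∈ k[[t₁,…,tₙ]]` algebraic over `k(t)`, the degree of `k(t)(f)`
over `k(t)` (expressed as the minimal `y`-degree of a nonzero polynomial annihilator
with coefficients in `k[t]`) equals the corresponding degree over the perfect closure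
`k_p` of `k`. -/
theorem stmt10 (p n : ℕ) [Fact p.Prime] (k : Type*) [Field k] [CharP k p]
    (f : MvPowerSeries (Fin n) k)
    (halg : ∃ E : Polynomial (MvPolynomial (Fin n) k),
      E ≠ 0 ∧ Polynomial.aeval f E = 0) :
    sInf {m : ℕ | ∃ E : Polynomial (MvPolynomial (Fin n) k),
        E ≠ 0 ∧ Polynomial.aeval f E = 0 ∧ E.natDegree = m}
    = sInf {m : ℕ | ∃ E : Polynomial (MvPolynomial (Fin n) (PerfectClosure k p)),
        E ≠ 0 ∧
        Polynomial.aeval (MvPowerSeries.map (PerfectClosure.of k p) f) E = 0 ∧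
        E.natDegree = m} := by
  classical
  letI : Algebra k (PerfectClosure k p) := (PerfectClosure.of k p).toAlgebra
  have halgMap : algebraMap k (PerfectClosure k p) = PerfectClosure.of k p := rfl
  set L := PerfectClosure k p
  set S₁ := {m : ℕ | ∃ E : Polynomial (MvPolynomial (Fin n) k),
      E ≠ 0 ∧ Polynomial.aeval f E = 0 ∧ E.natDegree = m} with hS₁
  set S₂ := {m : ℕ | ∃ E : Polynomial (MvPolynomial (Fin n) L),
      E ≠ 0 ∧ Polynomial.aeval (MvPowerSeries.map (PerfectClosure.of k p) f) E = 0 ∧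
      E.natDegree = m} with hS₂
  -- push forward construction
  have push : ∀ E : Polynomial (MvPolynomial (Fin n) k), E ≠ 0 → Polynomial.aeval f E = 0 →
      E.natDegree ∈ S₂ := by
    intro E hE h0
    refine ⟨E.map (MvPolynomial.map (algebraMap k L)), ?_, ?_, ?_⟩
    · exact (Polynomial.map_ne_zero_iff
        (MvPolynomial.map_injective _ (algebraMap k L).injective)).mpr hE
    · rw [← halgMap, aeval_map_eq, h0, map_zero]
    · exact Polynomial.natDegree_map_eq_of_injective
        (MvPolynomial.map_injective _ (algebraMap k L).injective) E
  have hS₁ne : S₁.Nonempty := by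
    obtain ⟨E, hE, h0⟩ := halg
    exact ⟨E.natDegree, E, hE, h0, rfl⟩
  have hS₂ne : S₂.Nonempty := by
    obtain ⟨E, hE, h0⟩ := halg
    exact ⟨E.natDegree, push E hE h0⟩
  -- descent construction
  have descend : ∀ E : Polynomial (MvPolynomial (Fin n) L), E ≠ 0 →
      Polynomial.aeval (MvPowerSeries.map (PerfectClosure.of k p) f) E = 0 →
      ∃ E' : Polynomial (MvPolynomial (Fin n) k), E' ≠ 0 ∧ Polynomial.aeval f E' = 0 ∧
        E'.natDegree ≤ E.natDegree := by
    intro E hE h0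
    set B := Module.Basis.ofVectorSpace k L with hB
    obtain ⟨i, hi⟩ : ∃ i, E.coeff i ≠ 0 := by
      by_contra h; push_neg at h
      exact hE (Polynomial.ext fun i => by rw [h i, Polynomial.coeff_zero])
    obtain ⟨d, hd⟩ : ∃ d, (E.coeff i).coeff d ≠ 0 := by
      by_contra h; push_neg at h
      exact hi (MvPolynomial.ext _ _ fun d => by rw [h d, MvPolynomial.coeff_zero])
    obtain ⟨b, hb⟩ : ∃ b, B.repr ((E.coeff i).coeff d) b ≠ 0 := by
      by_contra h; push_neg at h
      exact hd (by simpa using B.repr.injective (Finsupp.ext fun b => by simp [h b]))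
    refine ⟨rho B b E, ?_, ?_, ?_⟩
    · intro hzero
      apply hb
      have hcg := congrArg (fun P => (Polynomial.coeff P i).coeff d) hzero
      simpa [coeff_rho, coeff_mvrho] using hcg
    · rw [aeval_rho B b f E, ← halgMap] at *
      rw [h0, map_zero]
    · rw [Polynomial.natDegree_le_iff_coeff_eq_zero]
      intro N hN
      rw [coeff_rho, Polynomial.coeff_eq_zero_of_natDegree_lt hN]
      apply MvPolynomial.ext; intro e
      rw [coeff_mvrho]; simp
  apply le_antisymm
  · obtain ⟨E, hE, h0, hdeg⟩ := Nat.sInf_mem hS₂ne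
    obtain ⟨E', hE', h0', hle⟩ := descend E hE h0
    calc sInf S₁ ≤ E'.natDegree := Nat.sInf_le ⟨E', hE', h0', rfl⟩
    _ ≤ E.natDegree := hle
    _ = sInf S₂ := hdeg
  · obtain ⟨E, hE, h0, hdeg⟩ := Nat.sInf_mem hS₁ne
    calc sInf S₂ ≤ E.natDegree := Nat.sInf_le (push E hE h0)
    _ = sInf S₁ := hdeg
end
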